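/- arXiv:1310.8564 — 2 statements merged into one kernel-verified Lean document; each statement's English description precedes it below -/
import Mathlib

section
/- Let p ∈ ℂ[z,z⁻¹] be a non-zero Laurent polynomial in one variable with wd(p) ≥ 1. Then for all λ ≥ 0 one has μ_{S¹}({z ∈ S¹ : |p(z)| ≤ λ}) ≤ (8·√3/√47) · wd(p) · ( λ / |lead(p)| )^{1/wd(p)}. -/
open MeasureTheory Real Filter

noncomputable section

/-- `Laur d` is the Laurent polynomial ring `ℂ[ℤ^d] = ℂ[z₁^{±1},…,z_d^{±1}]`,
realized as the group algebra of `ℤ^d` over `ℂ`. -/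
abbrev Laur (d : ℕ) : Type := AddMonoidAlgebra ℂ (Fin d → ℤ)

/-- the coefficient of `z₁^{n₁}⋯z_d^{n_d}` in `p` -/
def coeff {d : ℕ} (p : Laur d) (n : Fin d → ℤ) : ℂ := (AddMonoidAlgebra.coeff p : (Fin d → ℤ) →₀ ℂ) n

/-- the top degree `n⁺` of `p` in the last variable `z_{d}` -/
def topDeg {d : ℕ} (p : Laur (d+1)) : ℤ :=
  sSup ((fun n : Fin (d+1) → ℤ => n (Fin.last d)) ''
    ((Finsupp.support (AddMonoidAlgebra.coeff p) : Finset (Fin (d+1) → ℤ)) : Set (Fin (d+1) → ℤ)))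

/-- the bottom degree `n⁻` of `p` in the last variable `z_{d}` -/
def botDeg {d : ℕ} (p : Laur (d+1)) : ℤ :=
  sInf ((fun n : Fin (d+1) → ℤ => n (Fin.last d)) ''
    ((Finsupp.support (AddMonoidAlgebra.coeff p) : Finset (Fin (d+1) → ℤ)) : Set (Fin (d+1) → ℤ)))

/-- the coefficient `q⁺(p) = q_{n⁺}` of the top power of the last variable:
a Laurent polynomial in one variable fewer -/
def qplus {d : ℕ} (p : Laur (d+1)) : Laur d :=
  AddMonoidAlgebra.ofCoeff (Finsupp.comapDomain (fun n : Fin d → ℤ => Fin.snoc n (topDeg p)) (AddMonoidAlgebra.coeff p)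
    (fun a _ b _ h => funext fun i => by simpa using congrFun h (Fin.castSucc i)))

/-- the leading coefficient `lead(p) = p_d`, obtained by iterating `q⁺` -/
def lead : {d : ℕ} → Laur d → ℂ
  | 0, p => coeff p 0
  | _+1, p => lead (qplus p)

/-- the width `wd(p) = max{w₀(p),…,w_{d-1}(p)}` where `w_i(p) = w(p_i)` and
`p_i = q⁺(p_{i-1})` -/
def wd : {d : ℕ} → Laur d → ℤ
  | 0, _ => 0
  | _+1, p => max (topDeg p - botDeg p) (wd (qplus p))

/-- evaluation of a Laurent polynomial at a point of `(ℂ^×)^d` -/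
def evalL {d : ℕ} (p : Laur d) (z : Fin d → ℂ) : ℂ :=
  Finsupp.sum (AddMonoidAlgebra.coeff p) fun n a => a * ∏ i, z i ^ n i

/-- the normalized Haar measure on the unit circle `S¹ ⊆ ℂ`, as a measure on `ℂ` -/
def circleMeasure : Measure ℂ :=
  Measure.map (fun x : ℝ => Complex.exp (2 * Real.pi * Complex.I * x))
    (volume.restrict (Set.Ioc (0:ℝ) 1))

instance : IsProbabilityMeasure circleMeasure := by
  have h1 : IsProbabilityMeasure (volume.restrict (Set.Ioc (0:ℝ) 1)) := by
    constructor
    simp [Real.volume_Ioc]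
  exact Measure.isProbabilityMeasure_map
    ((Complex.continuous_exp.comp (continuous_const.mul Complex.continuous_ofReal)).aemeasurable)

/-- the normalized Haar measure on the `d`-torus `T^d`, as a measure on `ℂ^d` -/
def torusMeasure (d : ℕ) : Measure (Fin d → ℂ) := Measure.pi fun _ => circleMeasure

/-- entrywise evaluation of a matrix over `ℂ[ℤ^d]` at a point of the torus -/
def evalMatrix {d m n : ℕ} (A : Matrix (Fin m) (Fin n) (Laur d)) (z : Fin d → ℂ) :
    Matrix (Fin m) (Fin n) ℂ := fun i j => evalL (A i j) z

/-- the spectral density function of `r_A^{(2)} : L²(ℤ^d)^m → L²(ℤ^d)^n`: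
`F_A(λ) = ∫_{T^d} #{i : μ_i(z) ≤ λ²} dμ_{T^d}(z)` where `μ₁(z),…,μ_m(z)` are the
eigenvalues of the positive semidefinite Hermitian matrix `A(z)·A(z)^*` -/
def sdf {d m n : ℕ} (A : Matrix (Fin m) (Fin n) (Laur d)) (lam : ℝ) : ℝ :=
  ∫ z, ((Finset.univ.filter fun i : Fin m =>
      (Matrix.isHermitian_mul_conjTranspose_self (evalMatrix A z)).eigenvalues i ≤ lam ^ 2).card : ℝ)
    ∂ torusMeasure d

/-- the `L¹`-norm `‖p‖₁` of a Laurent polynomial -/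
def norm1 {d : ℕ} (p : Laur d) : ℝ := Finsupp.sum (AddMonoidAlgebra.coeff p) fun _ a => ‖a‖

/-- the `L¹`-norm `‖A‖₁` of a matrix over `ℂ[ℤ^d]`: the maximum of the `L¹`-norms
of its entries -/
def norm1M {d m n : ℕ} (A : Matrix (Fin m) (Fin n) (Laur d)) : ℝ := ⨆ i, ⨆ j, norm1 (A i j)


lemma aux_pow_le_prod (t : ℝ) (ht : 0 ≤ t) :
    ∀ (M : Multiset ℝ), (∀ y ∈ M, t ≤ y) → t ^ Multiset.card M ≤ M.prod := by
  intro M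
  induction M using Multiset.induction_on with
  | empty => simp
  | cons a M ih =>
    intro hall
    have ha : t ≤ a := hall a (Multiset.mem_cons_self a M)
    have h2 : ∀ y ∈ M, t ≤ y := fun y hy => hall y (Multiset.mem_cons_of_mem hy)
    simp only [Multiset.card_cons, Multiset.prod_cons, pow_succ]
    calc t ^ Multiset.card M * t ≤ M.prod * a := by
          apply mul_le_mul (ih h2) ha ht
          exact le_trans (pow_nonneg ht _) (ih h2)
      _ = a * M.prod := mul_comm _ _

lemma aux_pow_lt_prod (t : ℝ) (ht : 0 ≤ t) (M : Multiset ℝ)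
    (hall : ∀ y ∈ M, t < y) (hM : M ≠ 0) : t ^ Multiset.card M < M.prod := by
  obtain ⟨a, ha0⟩ := Multiset.exists_mem_of_ne_zero hM
  obtain ⟨M', rfl⟩ := Multiset.exists_cons_of_mem ha0
  have ha : t < a := hall a (Multiset.mem_cons_self a M')
  have hall' : ∀ y ∈ M', t ≤ y := fun y hy => (hall y (Multiset.mem_cons_of_mem hy)).le
  have hMprod := aux_pow_le_prod t ht M' hall'
  have hMpos : 0 < M'.prod := by
    apply Multiset.prod_pos
    intro y hy; exact lt_of_le_of_lt ht (hall y (Multiset.mem_cons_of_mem hy))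
  simp only [Multiset.card_cons, Multiset.prod_cons, pow_succ]
  calc t ^ Multiset.card M' * t ≤ M'.prod * t := mul_le_mul_of_nonneg_right hMprod ht
    _ < M'.prod * a := mul_lt_mul_of_pos_left ha hMpos
    _ = a * M'.prod := mul_comm _ _

lemma arc_core (r : ℂ) (t : ℝ) (ht : 0 ≤ t) (hr : 1/2 ≤ ‖r‖)
    (x : ℝ) (hx : ‖Complex.exp (2*Real.pi*Complex.I*x) - r‖ ≤ t) :
    ∃ k : ℤ, |x - (Complex.arg r / (2*Real.pi) + k)| ≤ t/2 := by
  set ρ : ℝ := ‖r‖ with hρ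
  set θ : ℝ := Complex.arg r with hθ
  set y : ℝ := 2*Real.pi*x - θ with hy
  -- rewrite the distance
  have hfac : Complex.exp (2*Real.pi*Complex.I*x) - r
      = Complex.exp (θ*Complex.I) * (Complex.exp (y*Complex.I) - (ρ:ℂ)) := by
    have hr' : (ρ:ℂ) * Complex.exp (θ*Complex.I) = r := Complex.norm_mul_exp_arg_mul_I r
    rw [mul_sub, ← Complex.exp_add]
    rw [← hr']
    push_cast [hy]
    ring_nf
  have habs : ‖Complex.exp (y*Complex.I) - (ρ:ℂ)‖ ≤ t := by
    rw [hfac, norm_mul] at hx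
    rwa [Complex.norm_exp_ofReal_mul_I, one_mul] at hx
  -- squared inequality
  have hsq : (Real.cos y - ρ)^2 + (Real.sin y)^2 ≤ t^2 := by
    have h1 : ‖Complex.exp (y*Complex.I) - (ρ:ℂ)‖^2
        = (Real.cos y - ρ)^2 + (Real.sin y)^2 := by
      rw [Complex.sq_norm, Complex.normSq_apply]
      simp [Complex.exp_ofReal_mul_I_re, Complex.exp_ofReal_mul_I_im]
      ring
    nlinarith [norm_nonneg (Complex.exp (y*Complex.I) - (ρ:ℂ))]
  have hpyth : Real.sin y ^2 + Real.cos y ^2 = 1 := Real.sin_sq_add_cos_sq y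
  set s : ℝ := Real.sin (y/2) with hs
  have hcos : Real.cos y = 1 - 2 * s^2 := by
    have h2 : Real.cos (2*(y/2)) = 2 * Real.cos (y/2)^2 - 1 := Real.cos_two_mul (y/2)
    have h3 : Real.sin (y/2)^2 + Real.cos (y/2)^2 = 1 := Real.sin_sq_add_cos_sq (y/2)
    rw [show y = 2*(y/2) by ring, h2]
    linarith
  have hs2t : s^2 ≤ t^2 := by nlinarith [sq_nonneg (1-ρ), sq_nonneg s]
  have hst : |s| ≤ t := by
    rw [← Real.sqrt_sq_eq_abs]
    exact (Real.sqrt_le_sqrt hs2t).trans_eq (Real.sqrt_sq ht)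
  set k : ℤ := round (y / (2*Real.pi)) with hk
  set m : ℝ := y/2 - k*Real.pi with hm
  have hπ : (0:ℝ) < Real.pi := Real.pi_pos
  have hmle : |m| ≤ Real.pi/2 := by
    have h4 : |y/(2*Real.pi) - k| ≤ 1/2 := abs_sub_round _
    have h5 : m = Real.pi * (y/(2*Real.pi) - k) := by field_simp [hm]; ring
    rw [h5, abs_mul, abs_of_pos hπ]
    nlinarith
  have hsinm : |Real.sin m| ≤ t := by
    have h6 : Real.sin (m + k*Real.pi) = (-1)^k * Real.sin m := Real.sin_add_int_mul_pi m k
    have h7 : m + k*Real.pi = y/2 := by rw [hm]; ring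
    rw [h7] at h6
    have h8 : |s| = |Real.sin m| := by
      rw [hs, h6, abs_mul]
      rcases Int.even_or_odd k with he | ho
      · rw [he.neg_one_zpow]; simp
      · rw [ho.neg_one_zpow]; simp
    rwa [h8] at hst
  have hjordan : 2/Real.pi * |m| ≤ |Real.sin m| := Real.mul_abs_le_abs_sin hmle
  have hmt : |m| ≤ Real.pi * t / 2 := by
    have := hjordan.trans hsinm
    rw [div_mul_eq_mul_div, div_le_iff₀ hπ] at this
    nlinarith
  refine ⟨k, ?_⟩
  have hxval : x - (θ/(2*Real.pi) + k) = m / Real.pi := by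
    field_simp [hm, hy]
    ring
  rw [hxval, abs_div, abs_of_pos hπ, div_le_div_iff₀ hπ (by norm_num : (0:ℝ) < 2)]
  nlinarith


lemma aux_two_le_const : (2:ℝ) ≤ 8 * Real.sqrt 3 / Real.sqrt 47 := by
  have h47 : (0:ℝ) < Real.sqrt 47 := Real.sqrt_pos.2 (by norm_num)
  rw [le_div_iff₀ h47]
  nlinarith [Real.sq_sqrt (by norm_num : (47:ℝ) ≥ 0), Real.sq_sqrt (by norm_num : (3:ℝ) ≥ 0),
    Real.sqrt_nonneg (3:ℝ), Real.sqrt_nonneg (47:ℝ)]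

lemma arc_measure (r : ℂ) (t : ℝ) (ht : 0 ≤ t) :
    circleMeasure (Metric.closedBall r t) ≤ ENNReal.ofReal (2*t) := by
  by_cases ht2 : 1/2 ≤ t
  · calc circleMeasure (Metric.closedBall r t) ≤ 1 := prob_le_one
      _ ≤ ENNReal.ofReal (2*t) := by
          rw [ENNReal.one_le_ofReal]; linarith
  push_neg at ht2
  have hfm : Measurable (fun x : ℝ => Complex.exp (2 * Real.pi * Complex.I * x)) :=
    (Complex.continuous_exp.comp (continuous_const.mul Complex.continuous_ofReal)).measurable
  have hmapply : circleMeasure (Metric.closedBall r t)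
      = volume ((fun x : ℝ => Complex.exp (2 * Real.pi * Complex.I * x)) ⁻¹'
          (Metric.closedBall r t) ∩ Set.Ioc (0:ℝ) 1) := by
    rw [circleMeasure, Measure.map_apply hfm measurableSet_closedBall,
      Measure.restrict_apply (hfm measurableSet_closedBall)]
  rw [hmapply]
  have habs1 : ∀ x : ℝ, ‖Complex.exp (2 * Real.pi * Complex.I * x)‖ = 1 := by
    intro x
    rw [Complex.norm_exp]
    norm_num [Complex.mul_re, Complex.mul_im]
  by_cases hr : 1/2 ≤ ‖r‖
  · -- main case
    set β : ℝ := Complex.arg r / (2*Real.pi) with hβ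
    set k₀ : ℤ := ⌊5/4 - β⌋ with hk₀
    have hsub : (fun x : ℝ => Complex.exp (2 * Real.pi * Complex.I * x)) ⁻¹'
          (Metric.closedBall r t) ∩ Set.Ioc (0:ℝ) 1
        ⊆ Set.Icc (β + k₀ - t/2) (β + k₀ + t/2) ∪
          Set.Icc (β + (k₀-1) - t/2) (β + (k₀-1) + t/2) := by
      rintro x ⟨hx1, hx2⟩
      simp only [Set.mem_preimage, Metric.mem_closedBall, Complex.dist_eq] at hx1
      obtain ⟨k, hk⟩ := arc_core r t ht hr x hx1
      obtain ⟨hkl, hkr⟩ := abs_le.1 hk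
      have hx0 : 0 < x := hx2.1
      have hx1' : x ≤ 1 := hx2.2
      have hklt : (k:ℝ) < 5/4 - β := by simp only [hβ]; linarith
      have hkgt : -(1/4 : ℝ) - β < (k:ℝ) := by simp only [hβ]; linarith
      have hkle : k ≤ k₀ := by
        rw [hk₀]; exact Int.le_floor.2 hklt.le
      have hkge : k₀ - 1 ≤ k := by
        have h0 : (k₀ : ℝ) ≤ 5/4 - β := by rw [hk₀]; exact Int.floor_le _
        have h1 : (k₀ : ℝ) < (k:ℝ) + 2 := by linarith
        have h2 : k₀ < k + 2 := by exact_mod_cast h1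
        omega
      rcases (by omega : k = k₀ ∨ k = k₀ - 1) with rfl | rfl
      · left
        constructor <;> push_cast at hkl hkr ⊢ <;> linarith [hβ.ge, hβ.le]
      · right
        constructor <;> push_cast at hkl hkr ⊢ <;> linarith [hβ.ge, hβ.le]
    calc volume _ ≤ volume (Set.Icc (β + k₀ - t/2) (β + k₀ + t/2) ∪
          Set.Icc (β + (k₀-1) - t/2) (β + (k₀-1) + t/2)) := measure_mono hsub
      _ ≤ volume (Set.Icc (β + k₀ - t/2) (β + k₀ + t/2)) +
          volume (Set.Icc (β + (k₀-1) - t/2) (β + (k₀-1) + t/2)) := measure_union_le _ _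
      _ = ENNReal.ofReal t + ENNReal.ofReal t := by
          rw [Real.volume_Icc, Real.volume_Icc]
          norm_num
      _ = ENNReal.ofReal (2*t) := by
          rw [← ENNReal.ofReal_add ht ht]; norm_num [two_mul]
  · -- ball misses the circle
    have hempty : (fun x : ℝ => Complex.exp (2 * Real.pi * Complex.I * x)) ⁻¹'
          (Metric.closedBall r t) = ∅ := by
      ext x
      simp only [Set.mem_preimage, Metric.mem_closedBall, Complex.dist_eq, Set.mem_empty_iff_false,
        iff_false, not_le]
      push_neg at hr
      calc t < 1/2 := ht2
        _ ≤ 1 - ‖r‖ := by linarith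
        _ ≤ ‖Complex.exp (2 * Real.pi * Complex.I * x)‖ - ‖r‖ := by
            rw [habs1 x]
        _ ≤ ‖Complex.exp (2 * Real.pi * Complex.I * x) - r‖ :=
            norm_sub_norm_le _ _
    rw [hempty]
    simp

-- structure lemma
lemma structure_lemma (p : Laur 1) (hp : p ≠ 0) :
    lead p ≠ 0 ∧ ∃ R : Multiset ℂ, (Multiset.card R : ℤ) = topDeg p - botDeg p ∧
      ∀ z : ℂ, ‖z‖ = 1 →
        ‖evalL p ![z]‖
          = ‖lead p‖ * (R.map fun r => ‖z - r‖).prod := by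
  classical
  have hsupp : (AddMonoidAlgebra.coeff p).support.Nonempty := Finsupp.support_nonempty_iff.2 (mt AddMonoidAlgebra.coeff_eq_zero.1 hp)
  set T : ℤ := topDeg p with hT
  set B : ℤ := botDeg p with hB
  clear_value T B
  -- basic facts about T, B
  have hIm : ((fun n : Fin 1 → ℤ => n (Fin.last 0)) '' ((AddMonoidAlgebra.coeff p).support : Set (Fin 1 → ℤ)))
      = ↑((AddMonoidAlgebra.coeff p).support.image fun n => n (Fin.last 0)) := (Finset.coe_image).symm
  have hImfin : ((fun n : Fin 1 → ℤ => n (Fin.last 0)) '' ((AddMonoidAlgebra.coeff p).support : Set (Fin 1 → ℤ))).Finite := by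
    rw [hIm]; exact Set.toFinite _
  have hImne : ((fun n : Fin 1 → ℤ => n (Fin.last 0)) '' ((AddMonoidAlgebra.coeff p).support : Set (Fin 1 → ℤ))).Nonempty :=
    (Set.image_nonempty).2 hsupp
  have hTmem : T ∈ (fun n : Fin 1 → ℤ => n (Fin.last 0)) '' ((AddMonoidAlgebra.coeff p).support : Set (Fin 1 → ℤ)) := by
    rw [hT, topDeg]; exact Set.Nonempty.csSup_mem hImne hImfin
  have hBmem : B ∈ (fun n : Fin 1 → ℤ => n (Fin.last 0)) '' ((AddMonoidAlgebra.coeff p).support : Set (Fin 1 → ℤ)) := by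
    rw [hB, botDeg]; exact Set.Nonempty.csInf_mem hImne hImfin
  have hle : ∀ n ∈ (AddMonoidAlgebra.coeff p).support, B ≤ n (Fin.last 0) ∧ n (Fin.last 0) ≤ T := by
    intro n hn
    have hmem : n (Fin.last 0) ∈ (fun n : Fin 1 → ℤ => n (Fin.last 0)) ''
        ((AddMonoidAlgebra.coeff p).support : Set (Fin 1 → ℤ)) := Set.mem_image_of_mem _ hn
    constructor
    · rw [hB, botDeg]; exact csInf_le hImfin.bddBelow hmem
    · rw [hT, topDeg]; exact le_csSup hImfin.bddAbove hmem
  -- uniqueness of index function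
  have hinj : ∀ n n' : Fin 1 → ℤ, n (Fin.last 0) = n' (Fin.last 0) → n = n' := by
    intro n n' h
    funext i
    have : i = Fin.last 0 := Subsingleton.elim _ _
    rw [this]; exact h
  obtain ⟨n₀, hn₀S, hn₀⟩ := hTmem
  -- lead p = (AddMonoidAlgebra.coeff p) n₀
  have hlead : lead p = (AddMonoidAlgebra.coeff p) n₀ := by
    show lead (qplus p) = (AddMonoidAlgebra.coeff p) n₀
    show coeff (qplus p) 0 = (AddMonoidAlgebra.coeff p) n₀
    show (AddMonoidAlgebra.coeff p) (Fin.snoc (0 : Fin 0 → ℤ) (topDeg p)) = (AddMonoidAlgebra.coeff p) n₀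
    congr 1
    apply hinj
    simp only [Fin.snoc_last]
    have := hn₀
    simp only [hT] at this
    simpa using this.symm
  have hn₀S' : n₀ ∈ (AddMonoidAlgebra.coeff p).support := Finset.mem_coe.1 hn₀S
  have hn₀T : n₀ (Fin.last 0) = T := hn₀
  have hpn₀ : (AddMonoidAlgebra.coeff p) n₀ ≠ 0 := Finsupp.mem_support_iff.1 hn₀S'
  clear hn₀ hn₀S
  set W : ℕ := (T - B).toNat with hWdef
  clear_value W
  have hBT : B ≤ T := by
    have := hle n₀ hn₀S'
    omega
  have hWeq : (W : ℤ) = T - B := by rw [hWdef]; exact Int.toNat_of_nonneg (by omega)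
  -- the polynomial
  set P : Polynomial ℂ := ∑ n ∈ (AddMonoidAlgebra.coeff p).support,
      Polynomial.C ((AddMonoidAlgebra.coeff p) n) * Polynomial.X ^ (n (Fin.last 0) - B).toNat with hP
  clear_value P
  have hcoeffW : P.coeff W = (AddMonoidAlgebra.coeff p) n₀ := by
    rw [hP, Polynomial.finset_sum_coeff]
    rw [Finset.sum_eq_single_of_mem n₀ hn₀S']
    · rw [Polynomial.coeff_C_mul, Polynomial.coeff_X_pow, hn₀T, if_pos hWdef, mul_one]
    · intro n hn hne
      have h1 := hle n hn
      have h2 : (n (Fin.last 0) - B).toNat ≠ W := by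
        intro hcon
        apply hne
        apply hinj
        omega
      rw [Polynomial.coeff_C_mul, Polynomial.coeff_X_pow, if_neg (fun h => h2 h.symm), mul_zero]
  have hdegle : P.natDegree ≤ W := by
    rw [hP]
    apply Polynomial.natDegree_sum_le_of_forall_le
    intro n hn
    refine le_trans (Polynomial.natDegree_C_mul_X_pow_le _ _) ?_
    have := hle n hn
    omega
  have hPne : P ≠ 0 := fun h => hpn₀ (by rw [← hcoeffW, h, Polynomial.coeff_zero])
  have hdeg : P.natDegree = W :=
    le_antisymm hdegle (Polynomial.le_natDegree_of_ne_zero (hcoeffW ▸ hpn₀))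
  have hlc : P.leadingCoeff = (AddMonoidAlgebra.coeff p) n₀ := by
    rw [Polynomial.leadingCoeff, hdeg, hcoeffW]
  -- roots
  have hsplits : P.Splits := IsAlgClosed.splits P
  have hcard : Multiset.card P.roots = W := by
    rw [← hdeg]
    exact (Polynomial.splits_iff_card_roots.1 hsplits)
  have hfac : P = Polynomial.C P.leadingCoeff *
      (P.roots.map fun a => Polynomial.X - Polynomial.C a).prod :=
    hsplits.eq_prod_roots
  -- evaluation identity
  have heval : ∀ z : ℂ, z ≠ 0 → evalL p ![z] = z ^ (B : ℤ) * P.eval z := by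
    intro z hz
    rw [evalL, Finsupp.sum, hP, Polynomial.eval_finset_sum, Finset.mul_sum]
    apply Finset.sum_congr rfl
    intro n hn
    have h1 := (hle n hn).1
    have h2 : ∏ i, (![z]) i ^ n i = z ^ n (Fin.last 0) := by
      rw [Fin.prod_univ_one]
      rw [show (Fin.last 0) = (0 : Fin 1) from rfl]
      rfl
    rw [h2]
    rw [Polynomial.eval_mul, Polynomial.eval_C, Polynomial.eval_pow, Polynomial.eval_X]
    rw [← zpow_natCast z ((n (Fin.last 0) - B).toNat), Int.toNat_of_nonneg (by omega)]
    have h3 : z ^ B * z ^ (n (Fin.last 0) - B) = z ^ (n (Fin.last 0)) := by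
      rw [← zpow_add₀ hz]
      congr 1
      omega
    rw [← h3]
    ring
  refine ⟨hlead ▸ hpn₀, P.roots, by rw [hcard, hWeq], ?_⟩
  intro z hz1
  have hz : z ≠ 0 := by
    intro h; rw [h] at hz1; simp at hz1
  have hPeval : P.eval z = P.leadingCoeff * ((P.roots.map fun a => z - a).prod) := by
    conv_lhs => rw [hfac]
    rw [Polynomial.eval_mul, Polynomial.eval_C, Polynomial.eval_multiset_prod, Multiset.map_map]
    simp [Function.comp]
  rw [heval z hz, norm_mul, norm_zpow, hz1, one_zpow, one_mul, hPeval, norm_mul, hlc, hlead]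
  congr 1
  rw [show ‖(P.roots.map fun a => z - a).prod‖ = ((P.roots.map fun a => z - a).map
    (normHom : ℂ →*₀ ℝ)).prod from
      map_multiset_prod (normHom : ℂ →*₀ ℝ) (P.roots.map fun a => z - a), Multiset.map_map]
  rfl

/-- One-variable case: for a nonzero `p ∈ ℂ[z,z⁻¹]` with `wd(p) ≥ 1` and `λ ≥ 0`,
`μ_{S¹}({z ∈ S¹ : |p(z)| ≤ λ}) ≤ (8√3/√47)·wd(p)·(λ/|lead(p)|)^{1/wd(p)}`. -/
theorem measure_sublevel_one_variable (p : Laur 1) (hp : p ≠ 0) (hwd : 1 ≤ wd p)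
    (lam : ℝ) (hlam : 0 ≤ lam) :
    circleMeasure {z : ℂ | ‖z‖ = 1 ∧ ‖evalL p ![z]‖ ≤ lam} ≤
      ENNReal.ofReal (8 * Real.sqrt 3 / Real.sqrt 47 * (wd p : ℝ) *
        ((lam / ‖lead p‖) ^ ((wd p : ℝ)⁻¹))) := by
  classical
  -- structure of the polynomial
  obtain ⟨hlead0, R, hcardR, hevalR⟩ := structure_lemma p hp
  have habs0 : 0 < ‖lead p‖ := by
    exact norm_pos_iff.2 hlead0
  set W : ℕ := Multiset.card R with hWdef
  have hwd0 : wd p = max (topDeg p - botDeg p) (wd (qplus p)) := rfl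
  have hwdq : wd (qplus p) = 0 := rfl
  have hwdeq : wd p = (W : ℤ) := by
    rw [hwd0, hwdq] at hwd ⊢
    rw [hWdef, hcardR]
    omega
  have hW1 : 1 ≤ W := by
    have := hwd
    rw [hwdeq] at this
    exact_mod_cast this
  have hwdcast : ((wd p : ℤ) : ℝ) = (W : ℝ) := by rw [hwdeq]; push_cast; rfl
  set t : ℝ := (lam / ‖lead p‖) ^ ((wd p : ℝ))⁻¹ with htdef
  have hx0 : 0 ≤ lam / ‖lead p‖ := div_nonneg hlam habs0.le
  have ht : 0 ≤ t := Real.rpow_nonneg hx0 _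
  have htW : t ^ W = lam / ‖lead p‖ := by
    rw [htdef, hwdcast]
    exact Real.rpow_inv_natCast_pow hx0 (by omega)
  -- inclusion into union of balls
  have hsub : {z : ℂ | ‖z‖ = 1 ∧ ‖evalL p ![z]‖ ≤ lam}
      ⊆ ⋃ r ∈ R.toFinset, Metric.closedBall r t := by
    rintro z ⟨hz1, hz2⟩
    rw [hevalR z hz1] at hz2
    have hprod : (R.map fun r => ‖z - r‖).prod ≤ t ^ W := by
      rw [htW, le_div_iff₀ habs0]
      linarith [hz2]
    by_contra hcon
    simp only [Set.mem_iUnion, Metric.mem_closedBall, Complex.dist_eq, not_exists, not_le,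
      Multiset.mem_toFinset] at hcon
    have hall : ∀ y ∈ (R.map fun r => ‖z - r‖), t < y := by
      intro y hy
      obtain ⟨r, hr, rfl⟩ := Multiset.mem_map.1 hy
      exact hcon r hr
    have hne : (R.map fun r => ‖z - r‖) ≠ 0 := by
      intro h
      have := congrArg Multiset.card h
      rw [Multiset.card_map] at this
      simp only [Multiset.card_zero] at this
      omega
    have := aux_pow_lt_prod t ht _ hall hne
    rw [Multiset.card_map] at this
    exact absurd hprod (not_le.2 this)
  -- measure estimate
  calc circleMeasure {z : ℂ | ‖z‖ = 1 ∧ ‖evalL p ![z]‖ ≤ lam}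
      ≤ circleMeasure (⋃ r ∈ R.toFinset, Metric.closedBall r t) := measure_mono hsub
    _ ≤ ∑ r ∈ R.toFinset, circleMeasure (Metric.closedBall r t) :=
        measure_biUnion_finset_le _ _
    _ ≤ ∑ r ∈ R.toFinset, ENNReal.ofReal (2*t) :=
        Finset.sum_le_sum fun r _ => arc_measure r t ht
    _ = (R.toFinset.card : ENNReal) * ENNReal.ofReal (2*t) := by
        rw [Finset.sum_const, nsmul_eq_mul]
    _ ≤ (W : ENNReal) * ENNReal.ofReal (2*t) := by
        apply mul_le_mul_left
        exact_mod_cast R.toFinset_card_le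
    _ = ENNReal.ofReal ((W : ℝ) * (2*t)) := by
        rw [← ENNReal.ofReal_natCast W, ← ENNReal.ofReal_mul (by positivity)]
    _ ≤ ENNReal.ofReal (8 * Real.sqrt 3 / Real.sqrt 47 * (wd p : ℝ) *
          ((lam / ‖lead p‖) ^ ((wd p : ℝ))⁻¹)) := by
        apply ENNReal.ofReal_le_ofReal
        rw [hwdcast]
        have ht' : (lam / ‖lead p‖) ^ ((W:ℝ))⁻¹ = t := by
          rw [htdef, hwdcast]
        rw [ht']
        have hWnn : (0:ℝ) ≤ (W:ℝ) := Nat.cast_nonneg _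
        nlinarith [aux_two_le_const, mul_nonneg hWnn ht]
end
end

section
/- Let d ≥ 2, let p ∈ ℂ[z₁^{±1},…,z_d^{±1}] be a non-zero Laurent polynomial with wd(p) ≥ 1, and let λ satisfy 0 < λ ≤ |lead(p)|. Fix (z₁,…,z_{d−1}) ∈ T^{d−1} with |p₁(z₁,…,z_{d−1})| > |lead(p)|^{1/d}·λ^{(d−1)/d}. Then μ_{S¹}({z_d ∈ S¹ : |p(z₁,…,z_{d−1},z_d)| ≤ λ}) ≤ (8·√3/√47) · wd(p) · ( λ / |lead(p)| )^{1/(d·wd(p))}. -/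
open MeasureTheory Real Filter

noncomputable section

lemma chord (a b : ℝ) :
    ‖Complex.exp (a * Complex.I) - Complex.exp (b * Complex.I)‖ =
      2 * |Real.sin ((a - b) / 2)| := by
  have key : Complex.exp (a * Complex.I) - Complex.exp (b * Complex.I) =
      Complex.exp ((((a + b) / 2 : ℝ)) * Complex.I) *
        (2 * Complex.sin (((a - b) / 2 : ℝ)) * Complex.I) := by
    have h1 : (a : ℂ) * Complex.I = (((a+b)/2 : ℝ) : ℂ) * Complex.I + (((a-b)/2 : ℝ) : ℂ) * Complex.I := by
      push_cast; ring
    have h2 : (b : ℂ) * Complex.I = (((a+b)/2 : ℝ) : ℂ) * Complex.I + (-(((a-b)/2 : ℝ) : ℂ)) * Complex.I := by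
      push_cast; ring
    rw [h1, h2, Complex.exp_add, Complex.exp_add, ← mul_sub]
    congr 1
    rw [Complex.exp_mul_I, Complex.exp_mul_I, Complex.cos_neg, Complex.sin_neg]
    ring
  rw [key, norm_mul, norm_mul, norm_mul, Complex.norm_exp_ofReal_mul_I, Complex.norm_I,
    ← Complex.ofReal_sin, Complex.norm_real, Real.norm_eq_abs]
  norm_num

lemma two_abs_le_abs_sin {u : ℝ} (hu : |u| ≤ 1/2) : 2 * |u| ≤ |Real.sin (Real.pi * u)| := by
  have hpi := Real.pi_pos
  have h1 : 2 / Real.pi * (Real.pi * |u|) ≤ Real.sin (Real.pi * |u|) :=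
    Real.mul_le_sin (by positivity) (by nlinarith)
  have h2 : Real.sin (Real.pi * |u|) = |Real.sin (Real.pi * u)| := by
    rcases abs_cases u with ⟨h, h0⟩ | ⟨h, h0⟩
    · rw [h, abs_of_nonneg]
      exact Real.sin_nonneg_of_nonneg_of_le_pi (by positivity) (by nlinarith)
    · rw [h, mul_neg, Real.sin_neg, abs_of_nonpos]
      have h3 : 0 ≤ Real.sin (Real.pi * -u) :=
        Real.sin_nonneg_of_nonneg_of_le_pi (by nlinarith) (by nlinarith)
      rw [mul_neg, Real.sin_neg] at h3; linarith
  calc 2 * |u| = 2 / Real.pi * (Real.pi * |u|) := by field_simp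
    _ ≤ Real.sin (Real.pi * |u|) := h1
    _ = |Real.sin (Real.pi * u)| := h2

lemma circle_ball (α : ℂ) {t : ℝ} (ht : 0 < t) :
    circleMeasure (Metric.closedBall α t) ≤ ENNReal.ofReal (2 * t) := by
  by_cases hbig : (1:ℝ)/2 ≤ t
  · calc circleMeasure (Metric.closedBall α t) ≤ 1 := prob_le_one
      _ ≤ ENNReal.ofReal (2 * t) := by
          rw [← ENNReal.ofReal_one]
          exact ENNReal.ofReal_le_ofReal (by linarith)
  push_neg at hbig
  set f : ℝ → ℂ := fun x : ℝ => Complex.exp (2 * Real.pi * Complex.I * x) with hf_def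
  have hf : Measurable f :=
    (Complex.continuous_exp.comp (continuous_const.mul Complex.continuous_ofReal)).measurable
  have hS : MeasurableSet (Metric.closedBall α t) := measurableSet_closedBall
  rw [circleMeasure, Measure.map_apply hf hS, Measure.restrict_apply (hf hS)]
  set x₀ : ℝ := Complex.arg α / (2 * Real.pi) with hx₀_def
  have hsub : f ⁻¹' Metric.closedBall α t ∩ Set.Ioc 0 1 ⊆
      Set.Icc (x₀ - t/2) (x₀ + t/2) ∪ Set.Icc (x₀ + 1 - t/2) (x₀ + 1 + t/2) := by
    rintro x ⟨hx1, hx2⟩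
    have hpi := Real.pi_pos
    have hfx : f x = Complex.exp (((2 * Real.pi * x : ℝ)) * Complex.I) := by
      rw [hf_def]; push_cast; ring_nf
    have habs1 : ‖f x‖ = 1 := by rw [hfx]; exact Complex.norm_exp_ofReal_mul_I _
    have hd : ‖f x - α‖ ≤ t := by
      have h := hx1
      simp only [Set.mem_preimage, Metric.mem_closedBall] at h
      rwa [Complex.dist_eq] at h
    have hαabs : |‖α‖ - 1| ≤ t := by
      have h := abs_norm_sub_norm_le α (f x)
      simp only [habs1] at h
      refine h.trans ?_
      rw [← neg_sub, norm_neg]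
      exact hd
    have hα0 : (1:ℝ)/2 ≤ ‖α‖ := by
      have := abs_le.mp hαabs; linarith [this.1]
    have hαne : α ≠ 0 := by
      intro h; rw [h] at hα0; simp at hα0; linarith
    set β : ℂ := Complex.exp ((Complex.arg α : ℂ) * Complex.I) with hβ_def
    have hβ : ((‖α‖ : ℝ) : ℂ) * β = α := Complex.norm_mul_exp_arg_mul_I α
    have hαβ : ‖α - β‖ ≤ t := by
      have : α - β = (((‖α‖ : ℝ) : ℂ) - 1) * β := by rw [sub_mul, hβ, one_mul]
      rw [this, norm_mul]
      have hβ1 : ‖β‖ = 1 := Complex.norm_exp_ofReal_mul_I _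
      rw [hβ1, mul_one]
      calc ‖((‖α‖ : ℝ) : ℂ) - 1‖ = |‖α‖ - 1| := by
            rw [show (((‖α‖ : ℝ) : ℂ) - 1) = (((‖α‖ - 1 : ℝ)) : ℂ) by push_cast; ring,
              Complex.norm_real, Real.norm_eq_abs]
        _ ≤ t := hαabs
    have hfβ : ‖f x - β‖ ≤ 2 * t := by
      calc ‖f x - β‖ = ‖(f x - α) + (α - β)‖ := by ring_nf
        _ ≤ ‖f x - α‖ + ‖α - β‖ := norm_add_le _ _
        _ ≤ t + t := add_le_add hd hαβ
        _ = 2 * t := by ring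
    have harg : Complex.arg α = 2 * Real.pi * x₀ := by
      rw [hx₀_def]; field_simp
    have hchord : ‖f x - β‖ = 2 * |Real.sin (Real.pi * (x - x₀))| := by
      rw [hfx, hβ_def, harg]
      rw [show ((2 * Real.pi * x₀ : ℝ) : ℂ) * Complex.I = (((2 * Real.pi * x₀ : ℝ)) : ℂ) * Complex.I from rfl]
      rw [chord (2 * Real.pi * x) (2 * Real.pi * x₀)]
      congr 2
      ring
    have hsin : |Real.sin (Real.pi * (x - x₀))| ≤ t := by
      rw [hchord] at hfβ; linarith
    set y : ℝ := x - x₀ with hy_def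
    set k : ℤ := round y with hk_def
    have hu : |y - k| ≤ 1/2 := by
      exact abs_sub_round y
    have hper : |Real.sin (Real.pi * (y - k))| = |Real.sin (Real.pi * y)| := by
      have : Real.pi * y = Real.pi * (y - k) + k * Real.pi := by ring
      have hpm : |((-1:ℝ) ^ k)| = 1 := by
        rcases Int.even_or_odd k with hk | hk
        · rw [hk.neg_one_zpow]; norm_num
        · rw [hk.neg_one_zpow]; norm_num
      rw [this, Real.sin_add_int_mul_pi, abs_mul, hpm, one_mul]
    have hkey : 2 * |y - k| ≤ t := by
      have := two_abs_le_abs_sin hu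
      rw [hper] at this
      linarith
    have hx0a : x₀ ≤ 1/2 := by
      rw [hx₀_def, div_le_iff₀ (by positivity)]
      nlinarith [Complex.arg_le_pi α]
    have hx0b : -(1/2 : ℝ) < x₀ := by
      rw [hx₀_def, lt_div_iff₀ (by positivity)]
      nlinarith [Complex.neg_pi_lt_arg α]
    have hyk : |y - (k:ℝ)| < 1/4 := by
      rw [abs_sub_lt_iff] at *
      constructor <;> [skip; skip] <;> linarith [abs_le.mp (show |y - (k:ℝ)| ≤ t/2 by linarith [hkey])]
    have hky := abs_lt.mp hyk
    obtain ⟨hx2a, hx2b⟩ := hx2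
    have hk01 : k = 0 ∨ k = 1 := by
      have h1 : (-1:ℝ) < (k:ℝ) := by
        have : y > -(1/2 : ℝ) - 0 := by simp only [hy_def]; linarith
        linarith
      have h2 : (k:ℝ) < 2 := by
        have : y ≤ 3/2 := by simp only [hy_def]; linarith
        linarith
      have h1' : (-1:ℤ) < k := by exact_mod_cast h1
      have h2' : k < 2 := by exact_mod_cast h2
      omega
    have hmem : x ∈ Set.Icc (x₀ + (k:ℝ) - t/2) (x₀ + (k:ℝ) + t/2) := by
      rw [Set.mem_Icc]
      have := abs_le.mp (show |y - (k:ℝ)| ≤ t/2 by linarith [hkey])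
      constructor <;> simp only [hy_def] at this ⊢ <;> linarith [this.1, this.2]
    rcases hk01 with hk | hk
    · left; rw [hk] at hmem; simpa using hmem
    · right; rw [hk] at hmem
      convert hmem using 2 <;> push_cast <;> ring
  calc volume (f ⁻¹' Metric.closedBall α t ∩ Set.Ioc 0 1)
      ≤ volume (Set.Icc (x₀ - t/2) (x₀ + t/2) ∪ Set.Icc (x₀ + 1 - t/2) (x₀ + 1 + t/2)) :=
        measure_mono hsub
    _ ≤ volume (Set.Icc (x₀ - t/2) (x₀ + t/2)) + volume (Set.Icc (x₀ + 1 - t/2) (x₀ + 1 + t/2)) :=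
        measure_union_le _ _
    _ = ENNReal.ofReal t + ENNReal.ofReal t := by
        rw [Real.volume_Icc, Real.volume_Icc]
        congr 1 <;> ring_nf
    _ = ENNReal.ofReal (2*t) := by
        rw [← ENNReal.ofReal_add ht.le ht.le]; congr 1; ring

section Algebra
variable {e : ℕ}

lemma supp_ne (p : Laur (e+1)) (hp : p ≠ 0) :
    ((fun n : Fin (e+1) → ℤ => n (Fin.last e)) ''
      ((Finsupp.support (AddMonoidAlgebra.coeff p) : Finset (Fin (e+1) → ℤ)) : Set (Fin (e+1) → ℤ))).Nonempty := by
  refine Set.Nonempty.image _ ?_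
  rw [Finset.coe_nonempty]
  exact Finsupp.support_nonempty_iff.mpr (by simpa using hp)

lemma supp_fin (p : Laur (e+1)) :
    ((fun n : Fin (e+1) → ℤ => n (Fin.last e)) ''
      ((Finsupp.support (AddMonoidAlgebra.coeff p) : Finset (Fin (e+1) → ℤ)) : Set (Fin (e+1) → ℤ))).Finite :=
  Set.Finite.image _ (Finset.finite_toSet _)

lemma le_topDeg (p : Laur (e+1)) {n : Fin (e+1) → ℤ} (hn : n ∈ Finsupp.support (AddMonoidAlgebra.coeff p)) :
    n (Fin.last e) ≤ topDeg p :=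
  le_csSup (supp_fin p).bddAbove ⟨n, by simpa using hn, rfl⟩

lemma botDeg_le (p : Laur (e+1)) {n : Fin (e+1) → ℤ} (hn : n ∈ Finsupp.support (AddMonoidAlgebra.coeff p)) :
    botDeg p ≤ n (Fin.last e) :=
  csInf_le (supp_fin p).bddBelow ⟨n, by simpa using hn, rfl⟩

lemma botDeg_le_topDeg (p : Laur (e+1)) (hp : p ≠ 0) : botDeg p ≤ topDeg p := by
  obtain ⟨x, ⟨n, hn, rfl⟩⟩ := supp_ne p hp
  exact (botDeg_le p (by simpa using hn)).trans (le_topDeg p (by simpa using hn))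

lemma topDeg_mem (p : Laur (e+1)) (hp : p ≠ 0) :
    ∃ n ∈ Finsupp.support (AddMonoidAlgebra.coeff p), n (Fin.last e) = topDeg p := by
  have := Set.Nonempty.csSup_mem (supp_ne p hp) (supp_fin p)
  obtain ⟨n, hn, h⟩ := this
  exact ⟨n, by simpa using hn, h⟩

/-- the polynomial slice of `p` at `w` -/
def slicePoly (p : Laur (e+1)) (w : Fin e → ℂ) : Polynomial ℂ :=
  ∑ n ∈ Finsupp.support (AddMonoidAlgebra.coeff p),
    Polynomial.C (coeff p n * ∏ i : Fin e, w i ^ n (Fin.castSucc i)) *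
      Polynomial.X ^ (n (Fin.last e) - botDeg p).toNat

lemma slicePoly_eval (p : Laur (e+1)) (w : Fin e → ℂ) {z : ℂ} (hz : z ≠ 0) :
    evalL p (Fin.snoc w z) = z ^ (botDeg p) * Polynomial.eval z (slicePoly p w) := by
  rw [slicePoly, Polynomial.eval_finset_sum, Finset.mul_sum]
  rw [evalL, Finsupp.sum]
  refine Finset.sum_congr rfl fun n hn => ?_
  rw [Fin.prod_univ_castSucc]
  simp only [Fin.snoc_castSucc, Fin.snoc_last, Polynomial.eval_mul, Polynomial.eval_C,
    Polynomial.eval_pow, Polynomial.eval_X]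
  have h1 : z ^ (n (Fin.last e)) =
      z ^ (botDeg p) * z ^ ((n (Fin.last e) - botDeg p).toNat) := by
    rw [← zpow_natCast z, Int.toNat_of_nonneg (sub_nonneg.mpr (botDeg_le p hn)),
      ← zpow_add₀ hz]
    congr 1; ring
  rw [h1]
  simp only [coeff]
  ring

lemma slicePoly_coeff (p : Laur (e+1)) (hp : p ≠ 0) (w : Fin e → ℂ) :
    (slicePoly p w).coeff ((topDeg p - botDeg p).toNat) = evalL (qplus p) w := by
  classical
  rw [slicePoly, Polynomial.finset_sum_coeff]
  simp only [Polynomial.coeff_C_mul, Polynomial.coeff_X_pow]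
  have hstep : ∀ n ∈ Finsupp.support (AddMonoidAlgebra.coeff p),
      (coeff p n * ∏ i : Fin e, w i ^ n (Fin.castSucc i)) *
        (if (topDeg p - botDeg p).toNat = (n (Fin.last e) - botDeg p).toNat then (1:ℂ) else 0) =
      (if n (Fin.last e) = topDeg p then
        coeff p n * ∏ i : Fin e, w i ^ n (Fin.castSucc i) else 0) := by
    intro n hn
    have hiff : (topDeg p - botDeg p).toNat = (n (Fin.last e) - botDeg p).toNat ↔
        n (Fin.last e) = topDeg p := by
      have h1 := botDeg_le p hn
      have h2 := le_topDeg p hn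
      omega
    by_cases h : n (Fin.last e) = topDeg p
    · rw [if_pos h, if_pos (hiff.mpr h), mul_one]
    · rw [if_neg h, if_neg (fun hh => h (hiff.mp hh)), mul_zero]
  rw [Finset.sum_congr rfl hstep, ← Finset.sum_filter]
  -- now compute the RHS as a sum over the preimage
  have hqsupp : (AddMonoidAlgebra.coeff (qplus p)).support =
      (Finsupp.support (AddMonoidAlgebra.coeff p)).preimage (fun n : Fin e → ℤ => Fin.snoc n (topDeg p))
        (fun a _ b _ h => funext fun i => by simpa using congrFun h (Fin.castSucc i)) := rfl
  rw [evalL, Finsupp.sum, hqsupp]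
  have happ : ∀ m : Fin e → ℤ,
      AddMonoidAlgebra.coeff (qplus p) m * ∏ i : Fin e, w i ^ m i =
      (fun n : Fin (e+1) → ℤ => coeff p n * ∏ i : Fin e, w i ^ n (Fin.castSucc i))
        (Fin.snoc m (topDeg p)) := by
    intro m
    simp only [qplus, AddMonoidAlgebra.coeff_ofCoeff, Finsupp.comapDomain_apply, coeff, Fin.snoc_castSucc]
    rfl
  rw [Finset.sum_congr rfl (fun m _ => happ m)]
  have hpre :
      ∑ m ∈ (Finsupp.support (AddMonoidAlgebra.coeff p)).preimage (fun n : Fin e → ℤ => Fin.snoc n (topDeg p))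
        (fun a _ b _ h => funext fun i => by simpa using congrFun h (Fin.castSucc i)),
        (fun n : Fin (e+1) → ℤ => coeff p n * ∏ i : Fin e, w i ^ n (Fin.castSucc i))
          (Fin.snoc m (topDeg p)) =
      ∑ n ∈ Finsupp.support (AddMonoidAlgebra.coeff p) with
        n ∈ Set.range (fun m : Fin e → ℤ => Fin.snoc m (topDeg p)),
        coeff p n * ∏ i : Fin e, w i ^ n (Fin.castSucc i) :=
    Finset.sum_preimage' (fun m : Fin e → ℤ => Fin.snoc m (topDeg p)) (Finsupp.support (AddMonoidAlgebra.coeff p)) _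
      (fun n : Fin (e+1) → ℤ => coeff p n * ∏ i : Fin e, w i ^ n (Fin.castSucc i))
  rw [hpre]
  refine (Finset.sum_congr ?_ fun _ _ => rfl).symm
  ext n
  simp only [Finset.mem_filter]
  constructor
  · rintro ⟨hn, m, hm⟩
    refine ⟨hn, ?_⟩
    rw [← hm]; simp
  · rintro ⟨hn, hT⟩
    refine ⟨hn, ⟨fun i => n (Fin.castSucc i), ?_⟩⟩
    funext i
    refine Fin.lastCases ?_ (fun j => ?_) i
    · simp [hT]
    · simp [Fin.snoc_castSucc]
end Algebra

section Main
lemma pow_card_le_prod_real {t : ℝ} (ht : 0 ≤ t) (ms : Multiset ℝ) (h : ∀ x ∈ ms, t ≤ x) :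
    t ^ (Multiset.card ms) ≤ ms.prod := by
  induction ms using Multiset.induction with
  | empty => simp
  | cons x ms ih =>
    rw [Multiset.prod_cons, Multiset.card_cons, pow_succ]
    have hx := h x (Multiset.mem_cons_self x ms)
    have hms := ih (fun y hy => h y (Multiset.mem_cons_of_mem hy))
    have h1 : (0:ℝ) ≤ t ^ Multiset.card ms := by positivity
    have h2 : t ^ Multiset.card ms * t ≤ ms.prod * x :=
      mul_le_mul hms hx ht (le_trans h1 hms)
    linarith [h2]
lemma slicePoly_natDegree_le {e : ℕ} (p : Laur (e+1)) (w : Fin e → ℂ) :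
    (slicePoly p w).natDegree ≤ (topDeg p - botDeg p).toNat := by
  apply Polynomial.natDegree_sum_le_of_forall_le
  intro n hn
  refine (Polynomial.natDegree_C_mul_le _ _).trans ?_
  rw [Polynomial.natDegree_X_pow]
  exact Int.toNat_le_toNat (by have := le_topDeg p hn; omega)

/-- Induction step, second part. Here the total number of variables is `d = e+1 ≥ 2`
and `p₁ = q⁺(p)`. For `0 < λ ≤ |lead(p)|` and a fixed point `w ∈ T^{d−1}` with
`|p₁(w)| > |lead(p)|^{1/d}·λ^{(d−1)/d}`, the slice measure satisfies
`μ_{S¹}({z_d : |p(w,z_d)| ≤ λ}) ≤ (8√3/√47)·wd(p)·(λ/|lead(p)|)^{1/(d·wd(p))}`. -/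
theorem induction_step_second_part (e : ℕ) (he : 1 ≤ e) (p : Laur (e+1)) (hp : p ≠ 0)
    (hwd : 1 ≤ wd p)
    (lam : ℝ) (h0 : 0 < lam) (hle : lam ≤ ‖lead p‖)
    (w : Fin e → ℂ) (hw : ∀ i, ‖w i‖ = 1)
    (hbig : ‖lead p‖ ^ (((e : ℝ) + 1)⁻¹) * lam ^ ((e : ℝ) / ((e : ℝ) + 1)) <
      ‖evalL (qplus p) w‖) :
    circleMeasure {z : ℂ | ‖z‖ = 1 ∧ ‖evalL p (Fin.snoc w z)‖ ≤ lam} ≤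
      ENNReal.ofReal (8 * Real.sqrt 3 / Real.sqrt 47 * (wd p : ℝ) *
        ((lam / ‖lead p‖) ^ ((((e : ℝ) + 1) * (wd p : ℝ))⁻¹))) := by
  classical
  set L : ℝ := ‖lead p‖ with hL_def
  set c : ℂ := evalL (qplus p) w with hc_def
  have hL : 0 < L := lt_of_lt_of_le h0 hle
  have hE0 : (0:ℝ) < (e:ℝ) + 1 := by positivity
  set E : ℝ := ((e:ℝ) + 1)⁻¹ with hE_def
  have hEpos : 0 < E := by positivity
  have hcpos : 0 < ‖c‖ := lt_of_le_of_lt (by positivity) hbig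
  have hcne : c ≠ 0 := fun h => by simp [h] at hcpos
  set N : ℕ := (topDeg p - botDeg p).toNat with hN_def
  set g : Polynomial ℂ := slicePoly p w with hg_def
  have hcoeffN : g.coeff N = c := slicePoly_coeff p hp w
  have hgne : g ≠ 0 := fun h => hcne (by rw [← hcoeffN, h, Polynomial.coeff_zero])
  have hdeg : g.natDegree = N :=
    le_antisymm (slicePoly_natDegree_le p w)
      (Polynomial.le_natDegree_of_ne_zero (hcoeffN ▸ hcne))
  have hleadg : g.leadingCoeff = c := by
    rw [Polynomial.leadingCoeff, hdeg, hcoeffN]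
  -- the key strict inequality  lam / |c| < (lam / L) ^ E
  have hxlt : lam / ‖c‖ < (lam / L) ^ E := by
    have hsum : E + (e:ℝ) / ((e:ℝ) + 1) = 1 := by
      rw [hE_def]; field_simp; ring
    have hlam_split : lam = lam ^ E * lam ^ ((e:ℝ) / ((e:ℝ) + 1)) := by
      rw [← Real.rpow_add h0, hsum, Real.rpow_one]
    have hDpos : 0 < L ^ E * lam ^ ((e:ℝ) / ((e:ℝ) + 1)) := by positivity
    have h1 : lam / ‖c‖ < lam / (L ^ E * lam ^ ((e:ℝ) / ((e:ℝ) + 1))) :=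
      div_lt_div_of_pos_left h0 hDpos hbig
    refine h1.trans_le (le_of_eq ?_)
    rw [Real.div_rpow h0.le hL.le, div_eq_div_iff hDpos.ne' (by positivity : (L:ℝ) ^ E ≠ 0)]
    conv_lhs => rw [hlam_split]
    ring
  have hy0 : 0 < lam / L := by positivity
  have hy1 : lam / L ≤ 1 := (div_le_one hL).mpr hle
  -- degenerate case N = 0
  by_cases hN0 : N = 0
  · have hempty : {z : ℂ | ‖z‖ = 1 ∧ ‖evalL p (Fin.snoc w z)‖ ≤ lam} = ∅ := by
      rw [Set.eq_empty_iff_forall_notMem]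
      rintro z ⟨hz1, hz2⟩
      have hzne : z ≠ 0 := fun h => by simp [h] at hz1
      have hgC : g = Polynomial.C c := by
        rw [← hcoeffN, hN0]
        exact Polynomial.eq_C_of_natDegree_eq_zero (hN0 ▸ hdeg)
      have hev : ‖evalL p (Fin.snoc w z)‖ = ‖c‖ := by
        rw [slicePoly_eval p w hzne, ← hg_def, hgC, Polynomial.eval_C, norm_mul,
          norm_zpow, hz1, one_zpow, one_mul]
      rw [hev] at hz2
      have hlam_le : lam ≤ L ^ E * lam ^ ((e:ℝ) / ((e:ℝ) + 1)) := by
        have h2 : lam ^ E ≤ L ^ E := Real.rpow_le_rpow h0.le hle hEpos.le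
        have hsum : E + (e:ℝ) / ((e:ℝ) + 1) = 1 := by rw [hE_def]; field_simp; ring
        calc lam = lam ^ E * lam ^ ((e:ℝ) / ((e:ℝ) + 1)) := by
              rw [← Real.rpow_add h0, hsum, Real.rpow_one]
          _ ≤ L ^ E * lam ^ ((e:ℝ) / ((e:ℝ) + 1)) := by
              apply mul_le_mul_of_nonneg_right h2 (by positivity)
      linarith [hbig.trans_le hz2]
    rw [hempty, measure_empty]
    exact bot_le
  -- main case: N ≥ 1
  set t : ℝ := (lam / ‖c‖) ^ ((N:ℝ)⁻¹) with ht_def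
  have hxpos : 0 < lam / ‖c‖ := by positivity
  have ht0 : 0 < t := Real.rpow_pos_of_pos hxpos _
  have htN : t ^ N = lam / ‖c‖ := Real.rpow_inv_natCast_pow hxpos.le hN0
  have hsplits : Polynomial.Splits g := IsAlgClosed.splits g
  have hcard : g.roots.card = N := by
    rw [Polynomial.splits_iff_card_roots.mp hsplits, hdeg]
  have habsev : ∀ z : ℂ, ‖Polynomial.eval z g‖ =
      ‖c‖ * (g.roots.map fun a => ‖z - a‖).prod := by
    intro z
    conv_lhs => rw [hsplits.eq_prod_roots]
    rw [Polynomial.eval_mul, Polynomial.eval_C, hleadg, norm_mul, Polynomial.eval_multiset_prod]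
    congr 1
    rw [Multiset.map_map]
    have h2 := map_multiset_prod (normHom : ℂ →*₀ ℝ)
      (Multiset.map (Polynomial.eval z ∘ fun a => Polynomial.X - Polynomial.C a) g.roots)
    simp only [normHom_apply] at h2
    rw [h2, Multiset.map_map]
    refine congrArg Multiset.prod (Multiset.map_congr rfl fun a _ => ?_)
    simp
  -- every point of the sublevel set is close to a root
  have hroot : ∀ z : ℂ, ‖z‖ = 1 → ‖evalL p (Fin.snoc w z)‖ ≤ lam →
      ∃ a ∈ g.roots, ‖z - a‖ ≤ t := by
    intro z hz1 hz2
    have hzne : z ≠ 0 := fun h => by simp [h] at hz1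
    have hev : ‖evalL p (Fin.snoc w z)‖ = ‖Polynomial.eval z g‖ := by
      rw [slicePoly_eval p w hzne, ← hg_def, norm_mul, norm_zpow, hz1, one_zpow, one_mul]
    rw [hev, habsev z] at hz2
    have hP : (g.roots.map fun a => ‖z - a‖).prod ≤ lam / ‖c‖ := by
      rw [le_div_iff₀ hcpos]; linarith [hz2]
    by_contra hcon
    push_neg at hcon
    have hmem : ∃ a, a ∈ g.roots := by
      rw [← Multiset.card_pos_iff_exists_mem, hcard]
      omega
    obtain ⟨a, ha⟩ := hmem
    obtain ⟨s, hs⟩ := Multiset.exists_cons_of_mem ha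
    have hcards : Multiset.card s = N - 1 := by
      have := hcard
      rw [hs, Multiset.card_cons] at this
      omega
    have hP2 : (g.roots.map fun b => ‖z - b‖).prod =
        ‖z - a‖ * (s.map fun b => ‖z - b‖).prod := by
      rw [hs, Multiset.map_cons, Multiset.prod_cons]
    have hs_ge : t ^ (N - 1) ≤ (s.map fun b => ‖z - b‖).prod := by
      rw [← hcards, ← Multiset.card_map (fun b => ‖z - b‖) s]
      apply pow_card_le_prod_real ht0.le
      intro x hx
      obtain ⟨b, hb, rfl⟩ := Multiset.mem_map.mp hx
      exact (hcon b (hs ▸ Multiset.mem_cons_of_mem hb)).le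
    have hta : t < ‖z - a‖ := hcon a ha
    have htNN : t ^ N = t ^ (N - 1) * t := by
      rw [← pow_succ]
      congr 1
      omega
    have hprodpos : 0 < (s.map fun b => ‖z - b‖).prod :=
      lt_of_lt_of_le (by positivity) hs_ge
    have : t ^ N < (g.roots.map fun b => ‖z - b‖).prod := by
      rw [htNN, hP2]
      calc t ^ (N-1) * t ≤ (s.map fun b => ‖z - b‖).prod * t := by
            apply mul_le_mul_of_nonneg_right hs_ge ht0.le
        _ < (s.map fun b => ‖z - b‖).prod * ‖z - a‖ := by
            apply mul_lt_mul_of_pos_left hta hprodpos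
        _ = ‖z - a‖ * (s.map fun b => ‖z - b‖).prod := by ring
    rw [htN] at this
    linarith [hP]
  -- inclusion into union of closed balls around roots
  have hsub : {z : ℂ | ‖z‖ = 1 ∧ ‖evalL p (Fin.snoc w z)‖ ≤ lam} ⊆
      ⋃ a ∈ g.roots.toFinset, Metric.closedBall a t := by
    rintro z ⟨hz1, hz2⟩
    obtain ⟨a, ha, hat⟩ := hroot z hz1 hz2
    refine Set.mem_biUnion (Multiset.mem_toFinset.mpr ha) ?_
    rw [Metric.mem_closedBall, Complex.dist_eq]
    exact hat
  -- numeric comparison: t ≤ s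
  have hwdR : (1:ℝ) ≤ (wd p : ℝ) := by exact_mod_cast hwd
  have hNwd : (N:ℝ) ≤ (wd p : ℝ) := by
    have h1 : (N:ℤ) ≤ wd p := by
      have : wd p = max (topDeg p - botDeg p) (wd (qplus p)) := rfl
      rw [hN_def, this]
      have := le_max_left (topDeg p - botDeg p) (wd (qplus p))
      omega
    exact_mod_cast h1
  have hN1 : (1:ℝ) ≤ (N:ℝ) := by
    have : 1 ≤ N := by omega
    exact_mod_cast this
  set sfin : ℝ := (lam / L) ^ ((((e:ℝ) + 1) * (wd p : ℝ))⁻¹) with hs_def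
  have hsfin0 : 0 < sfin := Real.rpow_pos_of_pos hy0 _
  have hts : t ≤ sfin := by
    have h1 : t ≤ ((lam / L) ^ E) ^ ((N:ℝ)⁻¹) :=
      Real.rpow_le_rpow hxpos.le hxlt.le (by positivity)
    have h2 : ((lam / L) ^ E) ^ ((N:ℝ)⁻¹) = (lam / L) ^ (E * (N:ℝ)⁻¹) :=
      (Real.rpow_mul hy0.le _ _).symm
    have h3 : (lam / L) ^ (E * (N:ℝ)⁻¹) ≤ sfin := by
      rw [hs_def]
      apply Real.rpow_le_rpow_of_exponent_ge hy0 hy1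
      rw [hE_def, ← mul_inv]
      apply inv_anti₀ (by positivity)
      apply mul_le_mul_of_nonneg_left hNwd (by positivity)
    calc t ≤ ((lam / L) ^ E) ^ ((N:ℝ)⁻¹) := h1
      _ = (lam / L) ^ (E * (N:ℝ)⁻¹) := h2
      _ ≤ sfin := h3
  have hK : (2:ℝ) ≤ 8 * Real.sqrt 3 / Real.sqrt 47 := by
    have h47 : (0:ℝ) < Real.sqrt 47 := Real.sqrt_pos.mpr (by norm_num)
    rw [le_div_iff₀ h47]
    nlinarith [Real.sq_sqrt (by norm_num : (47:ℝ) ≥ 0), Real.sq_sqrt (by norm_num : (3:ℝ) ≥ 0),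
      Real.sqrt_nonneg 3, Real.sqrt_nonneg 47]
  -- assemble the measure estimate
  have hcardfin : (g.roots.toFinset.card : ℝ) ≤ (N:ℝ) := by
    have := Multiset.toFinset_card_le g.roots
    rw [hcard] at this
    exact_mod_cast this
  calc circleMeasure {z : ℂ | ‖z‖ = 1 ∧ ‖evalL p (Fin.snoc w z)‖ ≤ lam}
      ≤ circleMeasure (⋃ a ∈ g.roots.toFinset, Metric.closedBall a t) := measure_mono hsub
    _ ≤ ∑ a ∈ g.roots.toFinset, circleMeasure (Metric.closedBall a t) :=
        measure_biUnion_finset_le _ _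
    _ ≤ ∑ a ∈ g.roots.toFinset, ENNReal.ofReal (2 * t) :=
        Finset.sum_le_sum fun a _ => circle_ball a ht0
    _ = (g.roots.toFinset.card : ENNReal) * ENNReal.ofReal (2 * t) := by
        rw [Finset.sum_const, nsmul_eq_mul]
    _ ≤ ENNReal.ofReal (8 * Real.sqrt 3 / Real.sqrt 47 * (wd p : ℝ) * sfin) := by
        rw [show ((g.roots.toFinset.card : ENNReal)) = ENNReal.ofReal (g.roots.toFinset.card : ℝ) by
          rw [ENNReal.ofReal_natCast],
          ← ENNReal.ofReal_mul (Nat.cast_nonneg _)]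
        apply ENNReal.ofReal_le_ofReal
        calc (g.roots.toFinset.card : ℝ) * (2 * t)
            ≤ (wd p : ℝ) * (2 * t) :=
              mul_le_mul_of_nonneg_right (hcardfin.trans hNwd) (by linarith)
          _ ≤ (wd p : ℝ) * (2 * sfin) := by
              apply mul_le_mul_of_nonneg_left _ (by linarith : (0:ℝ) ≤ (wd p : ℝ))
              linarith
          _ ≤ (wd p : ℝ) * (8 * Real.sqrt 3 / Real.sqrt 47 * sfin) := by
              apply mul_le_mul_of_nonneg_left _ (by linarith : (0:ℝ) ≤ (wd p : ℝ))
              exact mul_le_mul_of_nonneg_right hK hsfin0.le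
          _ = 8 * Real.sqrt 3 / Real.sqrt 47 * (wd p : ℝ) * sfin := by ring
end Main
end
end
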